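/- Let D be a digraph, Q ⊆ V(D) such that D is 2-arc-strong in Q (every ordered pair of distinct vertices of Q is joined by 2 arc-disjoint directed paths). Suppose x₁,…,x_k,y₁,…,y_k are pairwise distinct vertices outside Q such that D contains two parallel arcs from Q to x₁, two parallel arcs from y_k to Q, two parallel arcs from y_i to x_{i+1} for all i ∈ [k−1], and for each i ∈ [k], an arc from x_i to y_i, an arc from x_i to Q, and an arc from Q to y_i. Then D is 2-arc-strong in Q ∪ {x₁,…,x_k,y₁,…,y_k}. -/

import Mathlib

/-- The arcs traversed by the walk `l`, as a list of ordered pairs. -/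
def arcsOf {V : Type*} (l : List V) : List (V × V) := l.zip l.tail

/-- There exist `m` pairwise arc-disjoint directed paths in the multidigraph `A`, each from a
vertex satisfying `src` to a vertex satisfying `tgt`.  Arc-disjointness in a multidigraph
means that each arc `(u,v)` is used, in total over all the paths, at most `A u v` times. -/
def HasArcDisjointPathsM {V : Type*} [DecidableEq V] (A : V → V → ℕ) (m : ℕ)
    (src tgt : V → Prop) : Prop :=
  ∃ P : Fin m → List V,
    (∀ i, (P i).Nodup ∧
      (∃ s, (P i).head? = some s ∧ src s) ∧ (∃ t, (P i).getLast? = some t ∧ tgt t)) ∧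
    ∀ u v : V, (∑ i, (arcsOf (P i)).count (u, v)) ≤ A u v

/-- The multidigraph `A` is `2`-arc-strong in `Q`: every ordered pair of distinct vertices of
`Q` is joined by two arc-disjoint directed paths. -/
def TwoArcStrongIn {V : Type*} [DecidableEq V] (A : V → V → ℕ) (Q : Finset V) : Prop :=
  ∀ u ∈ Q, ∀ v ∈ Q, u ≠ v → HasArcDisjointPathsM A 2 (· = u) (· = v)



namespace Stmt14
variable {V : Type*} [DecidableEq V]
set_option linter.unusedSectionVars false

theorem arcsOf_nil : arcsOf ([] : List V) = [] := rfl
theorem arcsOf_single (a : V) : arcsOf [a] = [] := rfl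
theorem arcsOf_cons_cons (a b : V) (l : List V) :
    arcsOf (a :: b :: l) = (a, b) :: arcsOf (b :: l) := rfl

/-- arc list of a concatenation through a shared vertex. -/
theorem arcsOf_append (xs : List V) (y : V) (ys : List V) :
    arcsOf (xs ++ y :: ys) = arcsOf (xs ++ [y]) ++ arcsOf (y :: ys) := by
  induction xs with
  | nil => simp [arcsOf]
  | cons a xs ih =>
    cases xs with
    | nil => simp [arcsOf_cons_cons, arcsOf_single]
    | cons b xs =>
      simpa [arcsOf_cons_cons] using congrArg (List.cons (a, b)) ih

/-- number of traversals of arc (a,b) by l -/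
def cnt (l : List V) (a b : V) : ℕ := (arcsOf l).count (a, b)

theorem cnt_nil (a b : V) : cnt ([] : List V) a b = 0 := rfl
theorem cnt_single (z a b : V) : cnt [z] a b = 0 := rfl

theorem cnt_cons_cons (u w : V) (l : List V) (a b : V) :
    cnt (u :: w :: l) a b = cnt (w :: l) a b + (if (a, b) = (u, w) then 1 else 0) := by
  simp only [cnt, arcsOf_cons_cons, List.count_cons, beq_iff_eq]
  by_cases h : (a, b) = (u, w)
  · simp [Prod.ext_iff] at h; simp [h]
  · rw [if_neg h, if_neg]; intro h2; exact h (by simp [Prod.ext_iff] at h2 ⊢; exact ⟨h2.1.symm, h2.2.symm⟩)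

theorem count_zip_le_count_left (l l' : List V) (a b : V) :
    (l.zip l').count (a, b) ≤ l.count a := by
  induction l generalizing l' with
  | nil => simp
  | cons x xs ih =>
    cases l' with
    | nil => simp
    | cons y ys =>
      simp only [List.zip_cons_cons, List.count_cons, beq_iff_eq]
      have := ih ys
      have h2 : (if (x,y) = (a,b) then 1 else 0) ≤ (if x = a then 1 else 0) := by
        by_cases h : (x,y) = (a,b)
        · simp [Prod.ext_iff] at h; simp [h]
        · simp [h]
      omega

theorem cnt_le_one_of_nodup {l : List V} (h : l.Nodup) (a b : V) : cnt l a b ≤ 1 := by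
  calc cnt l a b ≤ l.count a := count_zip_le_count_left _ _ _ _
  _ ≤ 1 := List.nodup_iff_count_le_one.mp h a

end Stmt14

namespace Stmt14
variable {V : Type*} [DecidableEq V]
set_option linter.unusedSectionVars false

/-- Any walk can be replaced by a duplicate-free walk with the same endpoints,
using no more traversals of each arc. -/
theorem deloopAux : ∀ (n : ℕ) (l : List V), l.length ≤ n →
    ∃ p : List V, p.Nodup ∧ p.head? = l.head? ∧ p.getLast? = l.getLast? ∧
      (∀ z ∈ p, z ∈ l) ∧ (∀ a b, cnt p a b ≤ cnt l a b) := by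
  intro n
  induction n with
  | zero => intro l hl; exact ⟨[], by simp_all [List.length_eq_zero_iff.mp (Nat.le_zero.mp hl)]⟩
  | succ n ih =>
  intro l hlen
  cases l with
  | nil => exact ⟨[], by simp⟩
  | cons a xs =>
    by_cases ha : a ∈ xs
    · obtain ⟨s, t, rfl⟩ := List.append_of_mem ha
      have hlen2 : (a :: t).length ≤ n := by
        simp at hlen ⊢; omega
      obtain ⟨p, hnd, hh, hl, hmem, hcnt⟩ := ih (a :: t) hlen2
      refine ⟨p, hnd, by simpa using hh, ?_, ?_, ?_⟩
      · rw [hl]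
        show _ = (a :: s ++ a :: t).getLast?
        rw [List.getLast?_append_of_ne_nil (a :: s) (by simp)]
      · intro z hz; have := hmem z hz; simp at this ⊢; tauto
      · intro u v
        refine (hcnt u v).trans ?_
        show (arcsOf (a :: t)).count (u,v) ≤ (arcsOf ((a :: s) ++ a :: t)).count (u,v)
        rw [arcsOf_append]
        simp [List.count_append]
    · cases xs with
      | nil => exact ⟨[a], by simp⟩
      | cons b ys =>
        obtain ⟨p, hnd, hh, hl, hmem, hcnt⟩ := ih (b :: ys) (by simp at hlen ⊢; omega)
        obtain ⟨p', rfl⟩ : ∃ p', p = b :: p' := by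
          cases p with
          | nil => simp at hh
          | cons c p' => exact ⟨p', by simp at hh; rw [hh]⟩
        refine ⟨a :: b :: p', ?_, by simp, ?_, ?_, ?_⟩
        · refine List.nodup_cons.mpr ⟨fun hmm => ha ?_, hnd⟩
          exact hmem _ hmm
        · rw [List.getLast?_cons_cons]
          rw [show (b :: p').getLast? = (b::ys).getLast? from hl]
          rfl
        · intro z hz
          simp at hz ⊢
          rcases hz with rfl | h
          · tauto
          · have := hmem z (by simpa using h); simp at this; tauto
        · intro u v
          rw [cnt_cons_cons, cnt_cons_cons]
          have := hcnt u v
          omega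

theorem deloop (l : List V) :
    ∃ p : List V, p.Nodup ∧ p.head? = l.head? ∧ p.getLast? = l.getLast? ∧
      (∀ z ∈ p, z ∈ l) ∧ (∀ a b, cnt p a b ≤ cnt l a b) :=
  deloopAux l.length l le_rfl

end Stmt14

namespace Stmt14
variable {V : Type*} [DecidableEq V] [Fintype V]
set_option linter.unusedSectionVars false
open Finset

/-- total capacity of arcs crossing from `S` to its complement -/
def crossSum (g : V → V → ℕ) (S : Finset V) : ℕ :=
  ∑ e : V × V, if e.1 ∈ S ∧ e.2 ∉ S then g e.1 e.2 else 0

/-- excess (out minus in) of `g` at `z` -/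
def exc (g : V → V → ℕ) (z : V) : ℤ :=
  (∑ w, (g z w : ℤ)) - ∑ w, (g w z : ℤ)

theorem exists_crossing_arc (S : Finset V) :
    ∀ (l : List V) (s t : V), l.head? = some s → l.getLast? = some t → s ∈ S → t ∉ S →
    ∃ a b, (a, b) ∈ arcsOf l ∧ a ∈ S ∧ b ∉ S := by
  intro l
  induction l with
  | nil => intro s t h; simp at h
  | cons a xs ih =>
    intro s t hh hl hs ht
    obtain rfl : s = a := by simpa using hh.symm
    cases xs with
    | nil =>
      obtain rfl : t = s := by simpa using hl.symm
      exact absurd hs ht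
    | cons b ys =>
      by_cases hb : b ∈ S
      · obtain ⟨a', b', hm, h1, h2⟩ := ih b t rfl (by simpa using hl) hb ht
        exact ⟨a', b', by simp [arcsOf_cons_cons]; tauto, h1, h2⟩
      · exact ⟨s, b, by simp [arcsOf_cons_cons], hs, hb⟩

theorem one_le_crossCnt (S : Finset V) (l : List V) (s t : V)
    (hh : l.head? = some s) (hl : l.getLast? = some t) (hs : s ∈ S) (ht : t ∉ S) :
    1 ≤ ∑ e : V × V, (if e.1 ∈ S ∧ e.2 ∉ S then cnt l e.1 e.2 else 0) := by
  obtain ⟨a, b, hm, h1, h2⟩ := exists_crossing_arc S l s t hh hl hs ht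
  have : 1 ≤ (if ((a,b) : V × V).1 ∈ S ∧ ((a,b) : V × V).2 ∉ S then cnt l a b else 0) := by
    simp only [h1, h2, and_true, if_pos, not_false_iff]
    exact List.count_pos_iff.mpr hm
  exact this.trans (Finset.single_le_sum (f := fun e : V × V => if e.1 ∈ S ∧ e.2 ∉ S then cnt l e.1 e.2 else 0) (fun e _ => Nat.zero_le _) (Finset.mem_univ (a, b)))

/-- easy direction: a family of arc-disjoint paths forces every cut to be large -/
theorem cut_le_of_hasPaths {A : V → V → ℕ} {m : ℕ} {src tgt : V → Prop}
    (h : HasArcDisjointPathsM A m src tgt) (S : Finset V)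
    (hsrc : ∀ s, src s → s ∈ S) (htgt : ∀ t, tgt t → t ∉ S) :
    m ≤ crossSum A S := by
  obtain ⟨P, hP, hcap⟩ := h
  have h1 : ∀ i : Fin m, 1 ≤ ∑ e : V × V, (if e.1 ∈ S ∧ e.2 ∉ S then cnt (P i) e.1 e.2 else 0) := by
    intro i
    obtain ⟨-, ⟨s, hh, hs⟩, ⟨t, hl, ht⟩⟩ := hP i
    exact one_le_crossCnt S (P i) s t hh hl (hsrc s hs) (htgt t ht)
  calc m = ∑ _i : Fin m, 1 := by simp
  _ ≤ ∑ i, ∑ e : V × V, (if e.1 ∈ S ∧ e.2 ∉ S then cnt (P i) e.1 e.2 else 0) :=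
      Finset.sum_le_sum (fun i _ => h1 i)
  _ = ∑ e : V × V, ∑ i, (if e.1 ∈ S ∧ e.2 ∉ S then cnt (P i) e.1 e.2 else 0) := Finset.sum_comm
  _ ≤ crossSum A S := by
      refine Finset.sum_le_sum (fun e _ => ?_)
      by_cases hc : e.1 ∈ S ∧ e.2 ∉ S
      · simp only [hc, if_pos, if_true]
        exact hcap e.1 e.2
      · simp [hc]

end Stmt14

namespace Stmt14
variable {V : Type*} [DecidableEq V] [Fintype V]
set_option linter.unusedSectionVars false
open Finset

theorem sum_if_eq_pair (p : V × V → Prop) [DecidablePred p] (e₀ : V × V) :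
    ∑ e : V × V, (if p e then (if e = e₀ then (1:ℤ) else 0) else 0)
      = if p e₀ then 1 else 0 := by
  rw [Finset.sum_eq_single e₀]
  · simp
  · intro e _ hne; simp [hne]
  · simp

theorem telescope (S : Finset V) :
    ∀ (l : List V) (s t : V), l.head? = some s → l.getLast? = some t →
    (∑ e : V × V, if e.1 ∈ S ∧ e.2 ∉ S then (cnt l e.1 e.2 : ℤ) else 0)
      - (∑ e : V × V, if e.1 ∉ S ∧ e.2 ∈ S then (cnt l e.1 e.2 : ℤ) else 0)
    = (if s ∈ S then 1 else 0) - (if t ∈ S then 1 else 0) := by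
  intro l
  induction l with
  | nil => intro s t h; simp at h
  | cons a xs ih =>
    intro s t hh hl
    obtain rfl : s = a := by simpa using hh.symm
    cases xs with
    | nil =>
      obtain rfl : t = s := by simpa using hl.symm
      simp [cnt_single]
    | cons b ys =>
      have key := ih b t rfl (by simpa using hl)
      have hsplit : ∀ (p : V × V → Prop) (_ : DecidablePred p),
          (∑ e : V × V, if p e then (cnt (s :: b :: ys) e.1 e.2 : ℤ) else 0)
          = (∑ e : V × V, if p e then (cnt (b :: ys) e.1 e.2 : ℤ) else 0)
            + (if p (s, b) then 1 else 0) := by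
        intro p hp
        rw [← sum_if_eq_pair p (s, b), ← Finset.sum_add_distrib]
        refine Finset.sum_congr rfl (fun e _ => ?_)
        rw [cnt_cons_cons]
        by_cases he : e = (s, b)
        · subst he
          by_cases hc : p (s, b) <;> simp [hc] <;> push_cast <;> ring
        · by_cases hc : p e <;> simp [hc, he] <;> push_cast <;> ring
      rw [hsplit (fun e => e.1 ∈ S ∧ e.2 ∉ S) inferInstance,
        hsplit (fun e => e.1 ∉ S ∧ e.2 ∈ S) inferInstance]
      have hind : ((if (s, b).1 ∈ S ∧ (s, b).2 ∉ S then (1:ℤ) else 0)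
          - (if (s, b).1 ∉ S ∧ (s, b).2 ∈ S then (1:ℤ) else 0))
          = (if s ∈ S then 1 else 0) - (if b ∈ S then 1 else 0) := by
        by_cases h1 : s ∈ S <;> by_cases h2 : b ∈ S <;> simp [h1, h2]
      linarith [key, hind]

theorem outsum_cnt : ∀ (l : List V) (z : V), ∑ w, cnt l z w = l.dropLast.count z := by
  intro l
  induction l with
  | nil => simp [cnt_nil]
  | cons a xs ih =>
    intro z
    cases xs with
    | nil => simp [cnt_single]
    | cons b ys =>
      have hsum : ∑ w, cnt (a :: b :: ys) z w
          = (∑ w, cnt (b :: ys) z w) + (if z = a then 1 else 0) := by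
        have : ∀ w, cnt (a :: b :: ys) z w = cnt (b :: ys) z w + (if (z, w) = (a, b) then 1 else 0) :=
          fun w => cnt_cons_cons a b ys z w
        rw [Finset.sum_congr rfl (fun w _ => this w), Finset.sum_add_distrib]
        congr 1
        rw [Finset.sum_eq_single b]
        · simp [Prod.ext_iff]
        · intro w _ hne; simp [Prod.ext_iff]; tauto
        · simp
      rw [hsum, ih z]
      have : (a :: b :: ys).dropLast = a :: (b :: ys).dropLast := rfl
      rw [this, List.count_cons]
      by_cases h : z = a
      · subst h; simp
      · simp [h, (show ¬ a = z from fun hh => h hh.symm)]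

theorem insum_cnt : ∀ (l : List V) (z : V), ∑ w, cnt l w z = l.tail.count z := by
  intro l
  induction l with
  | nil => simp [cnt_nil]
  | cons a xs ih =>
    intro z
    cases xs with
    | nil => simp [cnt_single]
    | cons b ys =>
      have hsum : ∑ w, cnt (a :: b :: ys) w z
          = (∑ w, cnt (b :: ys) w z) + (if z = b then 1 else 0) := by
        have : ∀ w, cnt (a :: b :: ys) w z = cnt (b :: ys) w z + (if (w, z) = (a, b) then 1 else 0) :=
          fun w => cnt_cons_cons a b ys w z
        rw [Finset.sum_congr rfl (fun w _ => this w), Finset.sum_add_distrib]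
        congr 1
        rw [Finset.sum_eq_single a]
        · simp [Prod.ext_iff]
        · intro w _ hne; simp [Prod.ext_iff]; tauto
        · simp
      rw [hsum, ih z]
      show _ = (b :: ys).count z
      rw [List.count_cons]
      have h3 : (b :: ys).tail = ys := rfl
      rw [h3]
      by_cases h : z = b
      · subst h; simp
      · simp [h, (show ¬ b = z from fun hh => h hh.symm)]

theorem exc_cnt (l : List V) (s t : V) (hh : l.head? = some s) (hl : l.getLast? = some t)
    (z : V) : exc (fun a b => cnt l a b) z
      = (if s = z then 1 else 0) - (if t = z then 1 else 0) := by
  have hne : l ≠ [] := by intro h; rw [h] at hh; simp at hh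
  have hdrop : l.dropLast ++ [t] = l := List.dropLast_append_getLast? t (by rw [hl]; rfl)
  have htail : s :: l.tail = l := by
    have h1 : l.head? = some (l.head hne) := List.head?_eq_head hne
    have h2 : l.head hne = s := Option.some.inj (h1.symm.trans hh)
    rw [← h2]; exact List.cons_head_tail hne
  have h1 : l.count z = l.dropLast.count z + (if t = z then 1 else 0) := by
    conv_lhs => rw [← hdrop]
    rw [List.count_append, List.count_singleton']
  have h2 : l.count z = (if s = z then 1 else 0) + l.tail.count z := by
    conv_lhs => rw [← htail]
    rw [List.count_cons]
    by_cases h : z = s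
    · subst h; simp; omega
    · simp [h, (show ¬ s = z from fun hh => h hh.symm)]
  unfold exc
  rw [show (∑ w, ((cnt l z w : ℤ))) = ((∑ w, cnt l z w : ℕ) : ℤ) by push_cast; ring]
  rw [show (∑ w, ((cnt l w z : ℤ))) = ((∑ w, cnt l w z : ℕ) : ℤ) by push_cast; ring]
  rw [outsum_cnt, insum_cnt]
  have := h1
  have := h2
  by_cases hs : s = z <;> by_cases ht : t = z <;> simp [hs, ht] at h1 h2 ⊢ <;> omega

theorem exc_add (f g : V → V → ℕ) (z : V) :
    exc (fun a b => f a b + g a b) z = exc f z + exc g z := by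
  unfold exc; push_cast; rw [Finset.sum_add_distrib, Finset.sum_add_distrib]; ring

theorem exc_sub (f g : V → V → ℕ) (h : ∀ a b, g a b ≤ f a b) (z : V) :
    exc (fun a b => f a b - g a b) z = exc f z - exc g z := by
  unfold exc
  have c1 : ∀ w, ((f z w - g z w : ℕ) : ℤ) = (f z w : ℤ) - g z w :=
    fun w => Nat.cast_sub (h z w)
  have c2 : ∀ w, ((f w z - g w z : ℕ) : ℤ) = (f w z : ℤ) - g w z :=
    fun w => Nat.cast_sub (h w z)
  rw [Finset.sum_congr rfl (fun w _ => c1 w), Finset.sum_congr rfl (fun w _ => c2 w),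
    Finset.sum_sub_distrib, Finset.sum_sub_distrib]
  ring

theorem exc_symm (m : V → V → ℕ) (h : ∀ a b, m a b = m b a) (z : V) : exc m z = 0 := by
  unfold exc
  rw [Finset.sum_congr rfl (fun w _ => by rw [h z w])]
  ring

end Stmt14

namespace Stmt14
variable {V : Type*} [DecidableEq V] [Fintype V]
set_option linter.unusedSectionVars false
open Finset

theorem extract_walk_aux : ∀ (N : ℕ) (g : V → V → ℕ) (u v : V), u ≠ v →
    (∑ a, ∑ b, g a b) ≤ N → 1 ≤ exc g u → (∀ z, z ≠ v → 0 ≤ exc g z) →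
    ∃ l : List V, l.head? = some u ∧ l.getLast? = some v ∧ ∀ a b, cnt l a b ≤ g a b := by
  intro N
  induction N with
  | zero =>
    intro g u v huv hN hu _
    exfalso
    have : ∀ a b, g a b = 0 := by
      intro a b
      have h1 : ∑ a, ∑ b, g a b = 0 := Nat.le_zero.mp hN
      have h2 := Finset.sum_eq_zero_iff.mp h1 a (mem_univ a)
      exact Finset.sum_eq_zero_iff.mp h2 b (mem_univ b)
    rw [show exc g u = 0 by unfold exc; simp [this]] at hu
    omega
  | succ N ih =>
    intro g u v huv hN hu hz
    -- find w with g u w ≥ 1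
    have hout : 1 ≤ ∑ w, g u w := by
      by_contra h
      have h0 : ∑ w, g u w = 0 := by omega
      have : ∀ w, g u w = 0 := fun w => Finset.sum_eq_zero_iff.mp h0 w (mem_univ w)
      unfold exc at hu
      have hle : (0:ℤ) ≤ ∑ w, (g w u : ℤ) := Finset.sum_nonneg (fun w _ => by positivity)
      rw [show (∑ w, (g u w : ℤ)) = 0 by simp [this]] at hu
      omega
    obtain ⟨w, hw⟩ : ∃ w, 1 ≤ g u w := by
      by_contra h
      push_neg at h
      have : ∀ w, g u w = 0 := fun w => by have := h w; omega
      simp [this] at hout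
    by_cases hwv : w = v
    · subst hwv
      refine ⟨[u, w], rfl, rfl, ?_⟩
      intro a b
      by_cases hab : ((a,b) : V × V) = (u, w)
      · rw [show a = u by exact congrArg Prod.fst hab, show b = w by exact congrArg Prod.snd hab]
        have : cnt [u, w] u w = 1 := by simp [cnt, arcsOf]
        omega
      · have : cnt [u, w] a b = 0 := by
          simp only [cnt, arcsOf]
          simp [List.count_eq_zero]
          intro h1 h2; exact hab (by rw [h1, h2])
        omega
    · set g' : V → V → ℕ := fun a b => if a = u ∧ b = w then g a b - 1 else g a b with hg'
      have hg'le : ∀ a b, g' a b ≤ g a b := by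
        intro a b; simp only [hg']; split <;> omega
      have hcast : ∀ a b, (g' a b : ℤ) = g a b - (if a = u ∧ b = w then 1 else 0) := by
        intro a b
        by_cases h : a = u ∧ b = w
        · obtain ⟨rfl, rfl⟩ := h
          simp only [hg']
          simp
          omega
        · simp only [hg', if_neg h]
          ring
      have hexc : ∀ z, exc g' z = exc g z - (if z = u then 1 else 0) + (if z = w then 1 else 0) := by
        intro z
        unfold exc
        rw [Finset.sum_congr rfl (fun b _ => hcast z b),
          Finset.sum_congr rfl (fun a _ => hcast a z),
          Finset.sum_sub_distrib, Finset.sum_sub_distrib]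
        have e1 : ∑ b, (if z = u ∧ b = w then (1:ℤ) else 0) = if z = u then 1 else 0 := by
          rw [Finset.sum_eq_single w] <;> simp +contextual
        have e2 : ∑ a, (if a = u ∧ z = w then (1:ℤ) else 0) = if z = w then 1 else 0 := by
          rw [Finset.sum_eq_single u] <;> simp +contextual
        rw [e1, e2]
        ring
      have hsum' : (∑ a, ∑ b, g' a b) ≤ N := by
        have : (∑ a, ∑ b, (g' a b + (if a = u ∧ b = w then 1 else 0))) = ∑ a, ∑ b, g a b := by
          refine Finset.sum_congr rfl (fun a _ => Finset.sum_congr rfl (fun b _ => ?_))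
          by_cases h : a = u ∧ b = w
          · obtain ⟨rfl, rfl⟩ := h
            simp only [hg']
            simp
            omega
          · simp only [hg', if_neg h]
            simp [h]
        have h2 : ∑ a, ∑ b, ((g' a b) + (if a = u ∧ b = w then 1 else 0))
            = (∑ a, ∑ b, g' a b) + 1 := by
          rw [show (∑ a, ∑ b, ((g' a b) + (if a = u ∧ b = w then 1 else 0)))
            = (∑ a, ∑ b, g' a b) + (∑ a, ∑ b, (if a = u ∧ b = w then (1:ℕ) else 0)) by
              rw [← Finset.sum_add_distrib]
              exact Finset.sum_congr rfl (fun a _ => Finset.sum_add_distrib)]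
          congr 1
          rw [Finset.sum_eq_single u]
          · rw [Finset.sum_eq_single w] <;> simp +contextual
          · intro a _ ha
            apply Finset.sum_eq_zero
            intro b _
            simp [ha]
          · simp
        omega
      have ihw : 1 ≤ exc g' w := by
        rw [hexc w]
        by_cases h : w = u
        · rw [if_pos h, if_pos rfl]
          subst h
          omega
        · rw [if_neg h, if_pos rfl]
          have h0 := hz w hwv
          omega
      have ihz : ∀ z, z ≠ v → 0 ≤ exc g' z := by
        intro z hzv
        rw [hexc z]
        have h0 := hz z hzv
        by_cases h1 : z = u <;> by_cases h2 : z = w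
        · rw [if_pos h1, if_pos h2]; omega
        · rw [if_pos h1, if_neg h2]; subst h1; omega
        · rw [if_pos h2, if_neg h1]; omega
        · rw [if_neg h1, if_neg h2]; omega
      have ih' := ih g' w v hwv hsum' ihw ihz
      obtain ⟨l, hh, hl, hcnt⟩ := ih'
      obtain ⟨l', rfl⟩ : ∃ l', l = w :: l' := by
        cases l with
        | nil => simp at hh
        | cons c l' => exact ⟨l', by simpa using (by simpa using hh : c = w) ▸ rfl⟩
      refine ⟨u :: w :: l', rfl, ?_, ?_⟩
      · rw [List.getLast?_cons_cons]; exact hl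
      · intro a b
        rw [cnt_cons_cons]
        have h1 := hcnt a b
        have h2 := hg'le a b
        by_cases hab : ((a,b) : V × V) = (u, w)
        · obtain ⟨rfl, rfl⟩ : a = u ∧ b = w := Prod.mk.injEq a b u w ▸ hab
          have : g' a b = g a b - 1 := by simp [hg']
          rw [if_pos hab]
          omega
        · rw [if_neg hab]
          have : g' a b = g a b := by
            simp only [hg']
            rw [if_neg]
            intro ⟨h1', h2'⟩; exact hab (by rw [h1', h2'])
          omega

end Stmt14

namespace Stmt14
variable {V : Type*} [DecidableEq V] [Fintype V]
set_option linter.unusedSectionVars false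
open Finset

def Reach (g : V → V → ℕ) : V → V → Prop := Relation.ReflTransGen (fun a b => 0 < g a b)

theorem reach_of_cuts (g : V → V → ℕ) (u v : V)
    (hcut : ∀ S : Finset V, u ∈ S → v ∉ S → 1 ≤ crossSum g S) : Reach g u v := by
  classical
  by_contra hnr
  set S : Finset V := Finset.univ.filter (fun z => Reach g u z) with hS
  have hu : u ∈ S := by simp [hS]; exact Relation.ReflTransGen.refl
  have hv : v ∉ S := by simp [hS]; exact hnr
  have h1 := hcut S hu hv
  have h0 : crossSum g S = 0 := by
    unfold crossSum
    apply Finset.sum_eq_zero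
    intro e _
    by_cases hc : e.1 ∈ S ∧ e.2 ∉ S
    · rw [if_pos hc]
      by_contra hne
      have hpos : 0 < g e.1 e.2 := Nat.pos_of_ne_zero hne
      have hr1 : Reach g u e.1 := by have := hc.1; simp [hS] at this; exact this
      have : Reach g u e.2 := Relation.ReflTransGen.tail hr1 hpos
      have := hc.2; simp [hS] at this; exact absurd ‹Reach g u e.2› this
    · rw [if_neg hc]
  omega

theorem path_of_reach (g : V → V → ℕ) (u v : V) (h : Reach g u v) :
    ∃ p : List V, p.Nodup ∧ p.head? = some u ∧ p.getLast? = some v ∧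
      ∀ a b, cnt p a b ≤ g a b := by
  have hwalk : ∃ l : List V, l.head? = some u ∧ l.getLast? = some v ∧
      ∀ a b, 0 < cnt l a b → 0 < g a b := by
    induction h with
    | refl => exact ⟨[u], rfl, rfl, by intro a b hc; rw [cnt_single] at hc; omega⟩
    | @tail b c hub hbc ih =>
      obtain ⟨l, hh, hl, hcnt⟩ := ih
      have hne : l ≠ [] := by intro hE; rw [hE] at hh; simp at hh
      have hdrop : l.dropLast ++ [b] = l := List.dropLast_append_getLast? b (by rw [hl]; rfl)
      refine ⟨l ++ [c], ?_, ?_, ?_⟩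
      · rw [List.head?_append_of_ne_nil _ hne]  -- maybe wrong name
        exact hh
      · rw [List.getLast?_concat]
      · intro a b' hc
        have harcs : arcsOf (l ++ [c]) = arcsOf l ++ [(b, c)] := by
          conv_lhs => rw [← hdrop]
          rw [List.append_assoc, List.singleton_append, arcsOf_append, hdrop]
          rfl
        rw [show cnt (l ++ [c]) a b' = (arcsOf l ++ [(b,c)]).count (a, b') from by
          rw [cnt, harcs]] at hc
        rw [List.count_append] at hc
        by_cases he : ((a, b') : V × V) = (b, c)
        · obtain ⟨rfl, rfl⟩ : a = b ∧ b' = c := Prod.mk.injEq a b' b c ▸ he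
          exact hbc
        · apply hcnt a b'
          have : ([(b,c)] : List (V × V)).count (a, b') = 0 := by
            refine List.count_eq_zero.mpr ?_
            simp only [List.mem_singleton]
            exact he
          rw [this] at hc
          rw [cnt]
          omega
  obtain ⟨l, hh, hl, hpos⟩ := hwalk
  obtain ⟨p, hnd, hph, hpl, _, hpc⟩ := deloop l
  refine ⟨p, hnd, hph.trans hh, hpl.trans hl, ?_⟩
  intro a b
  by_cases hzero : cnt p a b = 0
  · omega
  · have h1 : cnt p a b ≤ 1 := cnt_le_one_of_nodup hnd a b
    have h2 : 0 < g a b := hpos a b (by have := hpc a b; omega)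
    omega

end Stmt14

namespace Stmt14
variable {V : Type*} [DecidableEq V] [Fintype V]
set_option linter.unusedSectionVars false
open Finset

theorem menger_two (A : V → V → ℕ) (u v : V) (huv : u ≠ v)
    (hcut : ∀ S : Finset V, u ∈ S → v ∉ S → 2 ≤ crossSum A S) :
    HasArcDisjointPathsM A 2 (· = u) (· = v) := by
  -- first path
  obtain ⟨p1, hnd1, hh1, hl1, hc1⟩ := path_of_reach A u v
    (reach_of_cuts A u v (fun S hu hv => le_trans (by omega) (hcut S hu hv)))
  set c1 : V → V → ℕ := fun a b => cnt p1 a b with hc1def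
  -- residual capacities
  set R : V → V → ℕ := fun a b => A a b + c1 b a - c1 a b with hRdef
  have hRcut : ∀ S : Finset V, u ∈ S → v ∉ S → 1 ≤ crossSum R S := by
    intro S hu hv
    have hA2 := hcut S hu hv
    set F : ℕ := ∑ e : V × V, (if e.1 ∈ S ∧ e.2 ∉ S then c1 e.1 e.2 else 0) with hF
    set B : ℕ := ∑ e : V × V, (if e.1 ∈ S ∧ e.2 ∉ S then c1 e.2 e.1 else 0) with hB
    set Brev : ℕ := ∑ e : V × V, (if e.1 ∉ S ∧ e.2 ∈ S then c1 e.1 e.2 else 0) with hBrev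
    have hBeq : B = Brev := by
      rw [hB, hBrev]
      rw [← Equiv.sum_comp (Equiv.prodComm V V) _]
      refine Finset.sum_congr rfl (fun e _ => ?_)
      simp [Equiv.prodComm, and_comm]
    have hid : crossSum R S + F = crossSum A S + B := by
      unfold crossSum
      rw [hF, hB, ← Finset.sum_add_distrib, ← Finset.sum_add_distrib]
      refine Finset.sum_congr rfl (fun e _ => ?_)
      by_cases hc : e.1 ∈ S ∧ e.2 ∉ S
      · rw [if_pos hc, if_pos hc, if_pos hc, if_pos hc]
        have h1 := hc1 e.1 e.2
        have b1 : cnt p1 e.1 e.2 = c1 e.1 e.2 := rfl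
        have b2 : cnt p1 e.2 e.1 = c1 e.2 e.1 := rfl
        have hR : R e.1 e.2 = A e.1 e.2 + c1 e.2 e.1 - c1 e.1 e.2 := rfl
        omega
      · simp [hc]
    have htel : F = Brev + 1 := by
      have h := telescope S p1 u v hh1 hl1
      rw [if_pos hu, if_neg hv] at h
      have hcastF : (F : ℤ) = ∑ e : V × V, (if e.1 ∈ S ∧ e.2 ∉ S then (cnt p1 e.1 e.2 : ℤ) else 0) := by
        rw [hF]
        push_cast
        refine Finset.sum_congr rfl (fun e _ => ?_)
        split <;> simp <;> rfl
      have hcastB : (Brev : ℤ) = ∑ e : V × V, (if e.1 ∉ S ∧ e.2 ∈ S then (cnt p1 e.1 e.2 : ℤ) else 0) := by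
        rw [hBrev]
        push_cast
        refine Finset.sum_congr rfl (fun e _ => ?_)
        split <;> simp <;> rfl
      have : (F : ℤ) - Brev = 1 := by rw [hcastF, hcastB]; rw [h]; ring
      omega
    omega
  -- second path, in residual
  obtain ⟨p2, hnd2, hh2, hl2, hc2⟩ := path_of_reach R u v (reach_of_cuts R u v hRcut)
  set c2 : V → V → ℕ := fun a b => cnt p2 a b with hc2def
  -- combined flow with cancellation
  set s : V → V → ℕ := fun a b => c1 a b + c2 a b with hsdef
  set g : V → V → ℕ := fun a b => s a b - min (s a b) (s b a) with hgdef
  have hgA : ∀ a b, g a b ≤ A a b := by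
    intro a b
    have h1 := hc1 a b
    have h2 := hc2 a b
    have b1 : cnt p1 a b = c1 a b := rfl
    have b2 : cnt p1 b a = c1 b a := rfl
    have b3 : cnt p2 a b = c2 a b := rfl
    have b4 : cnt p2 b a = c2 b a := rfl
    have hR : R a b = A a b + c1 b a - c1 a b := rfl
    simp only [hgdef, hsdef]
    rcases le_total (c1 a b + c2 a b) (c1 b a + c2 b a) with h | h
    · rw [min_eq_left h]; omega
    · rw [min_eq_right h]; omega
  have hexc1 : ∀ z, exc c1 z = (if u = z then 1 else 0) - (if v = z then 1 else 0) :=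
    exc_cnt p1 u v hh1 hl1
  have hexc2 : ∀ z, exc c2 z = (if u = z then 1 else 0) - (if v = z then 1 else 0) :=
    exc_cnt p2 u v hh2 hl2
  have hexcg : ∀ z, exc g z = 2 * ((if u = z then 1 else 0) - (if v = z then 1 else 0)) := by
    intro z
    have hmin : ∀ a b, min (s a b) (s b a) ≤ s a b := fun a b => min_le_left _ _
    have h1 : exc g z = exc s z - exc (fun a b => min (s a b) (s b a)) z := exc_sub _ _ hmin z
    have h2 : exc (fun a b => min (s a b) (s b a)) z = 0 :=
      exc_symm _ (fun a b => min_comm _ _) z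
    have h3 : exc s z = exc c1 z + exc c2 z := exc_add c1 c2 z
    rw [h1, h2, h3, hexc1 z, hexc2 z]
    ring
  -- extract two walks
  obtain ⟨l1, hlh1, hll1, hlc1⟩ := extract_walk_aux (∑ a, ∑ b, g a b) g u v huv le_rfl
    (by rw [hexcg u]; simp [Ne.symm huv])
    (by intro z hzv
        rw [hexcg z]
        have : ¬ v = z := fun h => hzv h.symm
        by_cases h : u = z <;> simp [h, this])
  set g2 : V → V → ℕ := fun a b => g a b - cnt l1 a b with hg2def
  have hexcl1 : ∀ z, exc (fun a b => cnt l1 a b) z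
      = (if u = z then 1 else 0) - (if v = z then 1 else 0) := exc_cnt l1 u v hlh1 hll1
  have hexcg2 : ∀ z, exc g2 z = (if u = z then 1 else 0) - (if v = z then 1 else 0) := by
    intro z
    have h1 : exc g2 z = exc g z - exc (fun a b => cnt l1 a b) z := exc_sub _ _ hlc1 z
    rw [h1, hexcg z, hexcl1 z]
    ring
  obtain ⟨l2, hlh2, hll2, hlc2⟩ := extract_walk_aux (∑ a, ∑ b, g2 a b) g2 u v huv le_rfl
    (by rw [hexcg2 u]; simp [Ne.symm huv])
    (by intro z hzv
        rw [hexcg2 z]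
        have : ¬ v = z := fun h => hzv h.symm
        by_cases h : u = z <;> simp [h, this])
  -- deloop both
  obtain ⟨q1, hqnd1, hqh1, hql1, _, hqc1⟩ := deloop l1
  obtain ⟨q2, hqnd2, hqh2, hql2, _, hqc2⟩ := deloop l2
  refine ⟨![q1, q2], ?_, ?_⟩
  · intro i
    fin_cases i
    · exact ⟨hqnd1, ⟨u, hqh1.trans hlh1, rfl⟩, ⟨v, hql1.trans hll1, rfl⟩⟩
    · exact ⟨hqnd2, ⟨u, hqh2.trans hlh2, rfl⟩, ⟨v, hql2.trans hll2, rfl⟩⟩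
  · intro a b
    have hsum : (∑ i : Fin 2, (arcsOf (![q1, q2] i)).count (a, b))
        = cnt q1 a b + cnt q2 a b := by
      rw [Fin.sum_univ_two]
      rfl
    rw [hsum]
    have h1 := hqc1 a b
    have h2 := hqc2 a b
    have h3 := hlc1 a b
    have h4 := hlc2 a b
    have h5 : g2 a b = g a b - cnt l1 a b := rfl
    have h6 := hgA a b
    omega

end Stmt14

namespace Stmt14
variable {V : Type*} [DecidableEq V] [Fintype V]
set_option linter.unusedSectionVars false
open Finset

theorem crossSum_ge_single (A : V → V → ℕ) (S : Finset V) (a b : V)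
    (ha : a ∈ S) (hb : b ∉ S) : A a b ≤ crossSum A S := by
  have : A a b = (if ((a,b) : V × V).1 ∈ S ∧ ((a,b) : V × V).2 ∉ S then A a b else 0) := by
    simp [ha, hb]
  rw [this]
  exact Finset.single_le_sum (f := fun e : V × V => if e.1 ∈ S ∧ e.2 ∉ S then A e.1 e.2 else 0)
    (fun e _ => Nat.zero_le _) (Finset.mem_univ (a, b))

theorem crossSum_ge_pair (A : V → V → ℕ) (S : Finset V) (e1 e2 : V × V) (hne : e1 ≠ e2)
    (h1 : e1.1 ∈ S) (h1' : e1.2 ∉ S) (h2 : e2.1 ∈ S) (h2' : e2.2 ∉ S) :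
    A e1.1 e1.2 + A e2.1 e2.2 ≤ crossSum A S := by
  have hsub : ({e1, e2} : Finset (V × V)) ⊆ Finset.univ := Finset.subset_univ _
  calc A e1.1 e1.2 + A e2.1 e2.2
      = ∑ e ∈ ({e1, e2} : Finset (V × V)), (if e.1 ∈ S ∧ e.2 ∉ S then A e.1 e.2 else 0) := by
        rw [Finset.sum_pair hne]
        simp [h1, h1', h2, h2']
  _ ≤ crossSum A S := Finset.sum_le_sum_of_subset_of_nonneg hsub (fun _ _ _ => Nat.zero_le _)

theorem crossSum_ge_left (A : V → V → ℕ) (S : Finset V) (Q : Finset V) (w : V)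
    (hw : w ∉ S) (hQ : ∀ q ∈ Q, q ∈ S) : (∑ q ∈ Q, A q w) ≤ crossSum A S := by
  have hinj : Set.InjOn (fun q => ((q, w) : V × V)) Q := fun a _ b _ h => congrArg Prod.fst h
  calc (∑ q ∈ Q, A q w)
      = ∑ e ∈ Q.image (fun q => ((q, w) : V × V)), (if e.1 ∈ S ∧ e.2 ∉ S then A e.1 e.2 else 0) := by
        rw [Finset.sum_image (fun a ha b hb h => hinj ha hb h)]
        refine Finset.sum_congr rfl (fun q hq => ?_)
        simp [hQ q hq, hw]
  _ ≤ crossSum A S := Finset.sum_le_sum_of_subset_of_nonneg (Finset.subset_univ _)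
      (fun _ _ _ => Nat.zero_le _)

theorem crossSum_ge_right (A : V → V → ℕ) (S : Finset V) (Q : Finset V) (w : V)
    (hw : w ∈ S) (hQ : ∀ q ∈ Q, q ∉ S) : (∑ q ∈ Q, A w q) ≤ crossSum A S := by
  have hinj : Set.InjOn (fun q => ((w, q) : V × V)) Q := fun a _ b _ h => congrArg Prod.snd h
  calc (∑ q ∈ Q, A w q)
      = ∑ e ∈ Q.image (fun q => ((w, q) : V × V)), (if e.1 ∈ S ∧ e.2 ∉ S then A e.1 e.2 else 0) := by
        rw [Finset.sum_image (fun a ha b hb h => hinj ha hb h)]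
        refine Finset.sum_congr rfl (fun q hq => ?_)
        simp [hQ q hq, hw]
  _ ≤ crossSum A S := Finset.sum_le_sum_of_subset_of_nonneg (Finset.subset_univ _)
      (fun _ _ _ => Nat.zero_le _)

theorem exists_pos_of_sum (Q : Finset V) (f : V → ℕ) (h : 1 ≤ ∑ q ∈ Q, f q) :
    ∃ q ∈ Q, 1 ≤ f q := by
  by_contra hc
  push_neg at hc
  have : ∑ q ∈ Q, f q = 0 := Finset.sum_eq_zero (fun q hq => by have := hc q hq; omega)
  omega

end Stmt14


open Stmt14 in
/-- If `D` is `2`-arc-strong in `Q` and `x₁,…,x_k,y₁,…,y_k` are distinct vertices outside `Q`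
with two parallel arcs from `Q` to `x₁`, two from `y_k` to `Q`, two from `yᵢ` to `xᵢ₊₁` for
each `i ∈ [k-1]`, and, for each `i`, an arc from `xᵢ` to `yᵢ`, an arc from `xᵢ` to `Q`, and
an arc from `Q` to `yᵢ`, then `D` is `2`-arc-strong in `Q ∪ {x₁,…,x_k,y₁,…,y_k}`. -/
theorem stmt_14 {V : Type*} [Fintype V] [DecidableEq V] (A : V → V → ℕ)
    (Q : Finset V) (hQ : TwoArcStrongIn A Q)
    (k : ℕ) (hk : 0 < k) (x y : Fin k → V)
    (hxinj : Function.Injective x) (hyinj : Function.Injective y)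
    (hxy : ∀ i j, x i ≠ y j)
    (hxQ : ∀ i, x i ∉ Q) (hyQ : ∀ i, y i ∉ Q)
    (hx1 : 2 ≤ ∑ q ∈ Q, A q (x ⟨0, hk⟩))
    (hyk : 2 ≤ ∑ q ∈ Q, A (y ⟨k - 1, by omega⟩) q)
    (hyx : ∀ i : Fin k, ∀ h : (i : ℕ) + 1 < k, 2 ≤ A (y i) (x ⟨(i : ℕ) + 1, h⟩))
    (hxyarc : ∀ i, 1 ≤ A (x i) (y i))
    (hxtoQ : ∀ i, 1 ≤ ∑ q ∈ Q, A (x i) q)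
    (hQtoy : ∀ i, 1 ≤ ∑ q ∈ Q, A q (y i)) :
    TwoArcStrongIn A (Q ∪ Finset.image x Finset.univ ∪ Finset.image y Finset.univ) := by
  intro u hu v hv huv
  apply menger_two A u v huv
  intro S hSu hSv
  by_cases hQS : ∀ q ∈ Q, q ∈ S
  · -- Q ⊆ S; v is a new vertex outside S
    have key : ∀ n, ∀ h : n < k,
        ((x ⟨n, h⟩ ∉ S → 2 ≤ crossSum A S) ∧ (y ⟨n, h⟩ ∉ S → 2 ≤ crossSum A S)) := by
      intro n
      induction n using Nat.strong_induction_on with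
      | _ n ih =>
      intro h
      have hx : x ⟨n, h⟩ ∉ S → 2 ≤ crossSum A S := by
        intro hxS
        match n, h, hxS with
        | 0, h, hxS =>
          exact le_trans hx1 (crossSum_ge_left A S Q (x ⟨0, h⟩) hxS hQS)
        | (m+1), h, hxS =>
          by_cases hym : y ⟨m, by omega⟩ ∈ S
          · refine le_trans (hyx ⟨m, by omega⟩ (by simpa using h)) ?_
            exact crossSum_ge_single A S _ _ hym hxS
          · exact (ih m (by omega) (by omega)).2 hym
      refine ⟨hx, ?_⟩
      intro hyS
      by_cases hxn : x ⟨n, h⟩ ∈ S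
      · obtain ⟨q, hqQ, hq1⟩ := exists_pos_of_sum Q _ (hQtoy ⟨n, h⟩)
        have hne : ((q, y ⟨n, h⟩) : V × V) ≠ (x ⟨n, h⟩, y ⟨n, h⟩) := by
          intro hEq
          have hEq' : q = x ⟨n, h⟩ ∧ y ⟨n, h⟩ = y ⟨n, h⟩ := Prod.mk.injEq _ _ _ _ ▸ hEq
          exact hxQ ⟨n, h⟩ (hEq'.1 ▸ hqQ)
        have := crossSum_ge_pair A S (q, y ⟨n, h⟩) (x ⟨n, h⟩, y ⟨n, h⟩) hne
          (hQS q hqQ) hyS hxn hyS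
        dsimp only at this
        have h2 := hxyarc ⟨n, h⟩
        omega
      · exact hx hxn
    -- v must be x j or y j
    have hvQ : v ∉ Q := fun hvq => hSv (hQS v hvq)
    simp only [Finset.mem_union, Finset.mem_image, Finset.mem_univ, true_and] at hv
    rcases hv with (hv | ⟨j, rfl⟩) | ⟨j, rfl⟩
    · exact absurd hv hvQ
    · exact (key j.1 j.2).1 (by simpa using hSv)
    · exact (key j.1 j.2).2 (by simpa using hSv)
  · by_cases hQS2 : ∀ q ∈ Q, q ∉ S
    · -- Q disjoint from S; u is a new vertex in S
      have key : ∀ d : ℕ, ∀ n, ∀ h : n < k, k - 1 - n ≤ d →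
          ((y ⟨n, h⟩ ∈ S → 2 ≤ crossSum A S) ∧ (x ⟨n, h⟩ ∈ S → 2 ≤ crossSum A S)) := by
        intro d
        induction d with
        | zero =>
          intro n h hd
          obtain rfl : n = k - 1 := by omega
          have hy : y ⟨k - 1, h⟩ ∈ S → 2 ≤ crossSum A S := by
            intro hyS
            exact le_trans hyk (crossSum_ge_right A S Q _ hyS hQS2)
          refine ⟨hy, ?_⟩
          intro hxS
          by_cases hyn : y ⟨k - 1, h⟩ ∈ S
          · exact hy hyn
          · obtain ⟨q, hqQ, hq1⟩ := exists_pos_of_sum Q _ (hxtoQ ⟨k - 1, h⟩)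
            have hne : ((x ⟨k-1, h⟩, q) : V × V) ≠ (x ⟨k-1, h⟩, y ⟨k-1, h⟩) := by
              intro hEq
              have hEq' : x ⟨k-1, h⟩ = x ⟨k-1, h⟩ ∧ q = y ⟨k-1, h⟩ := Prod.mk.injEq _ _ _ _ ▸ hEq
              exact hyQ ⟨k-1, h⟩ (hEq'.2 ▸ hqQ)
            have := crossSum_ge_pair A S (x ⟨k-1,h⟩, q) (x ⟨k-1,h⟩, y ⟨k-1,h⟩) hne
              hxS (hQS2 q hqQ) hxS hyn
            dsimp only at this
            have h2 := hxyarc ⟨k-1, h⟩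
            omega
        | succ d ih =>
          intro n h hd
          have hy : y ⟨n, h⟩ ∈ S → 2 ≤ crossSum A S := by
            intro hyS
            by_cases hnk : n = k - 1
            · subst hnk
              exact le_trans hyk (crossSum_ge_right A S Q _ hyS hQS2)
            · have hn1 : n + 1 < k := by omega
              by_cases hx1' : x ⟨n + 1, hn1⟩ ∈ S
              · exact (ih (n+1) hn1 (by omega)).2 hx1'
              · refine le_trans (hyx ⟨n, h⟩ (by simpa using hn1)) ?_
                exact crossSum_ge_single A S _ _ hyS hx1'
          refine ⟨hy, ?_⟩
          intro hxS
          by_cases hyn : y ⟨n, h⟩ ∈ S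
          · exact hy hyn
          · obtain ⟨q, hqQ, hq1⟩ := exists_pos_of_sum Q _ (hxtoQ ⟨n, h⟩)
            have hne : ((x ⟨n, h⟩, q) : V × V) ≠ (x ⟨n, h⟩, y ⟨n, h⟩) := by
              intro hEq
              have hEq' : x ⟨n, h⟩ = x ⟨n, h⟩ ∧ q = y ⟨n, h⟩ := Prod.mk.injEq _ _ _ _ ▸ hEq
              exact hyQ ⟨n, h⟩ (hEq'.2 ▸ hqQ)
            have := crossSum_ge_pair A S (x ⟨n,h⟩, q) (x ⟨n,h⟩, y ⟨n,h⟩) hne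
              hxS (hQS2 q hqQ) hxS hyn
            dsimp only at this
            have h2 := hxyarc ⟨n, h⟩
            omega
      have huQ : u ∉ Q := fun huq => hQS2 u huq hSu
      simp only [Finset.mem_union, Finset.mem_image, Finset.mem_univ, true_and] at hu
      rcases hu with (hu | ⟨j, rfl⟩) | ⟨j, rfl⟩
      · exact absurd hu huQ
      · exact (key (k - 1) j.1 j.2 (by omega)).2 (by simpa using hSu)
      · exact (key (k - 1) j.1 j.2 (by omega)).1 (by simpa using hSu)
    · -- Q meets both S and its complement
      push_neg at hQS hQS2
      obtain ⟨q0, hq0Q, hq0S⟩ := hQS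
      obtain ⟨q1, hq1Q, hq1S⟩ := hQS2
      have hne : q1 ≠ q0 := fun h => hq0S (h ▸ hq1S)
      exact cut_le_of_hasPaths (hQ q1 hq1Q q0 hq0Q hne) S
        (fun s hs => hs ▸ hq1S) (fun t ht => ht ▸ hq0S)
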